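/- For any constants a, b and as z → ∞ over the positive reals, Γ(z+a)/Γ(z+b) = z^{a−b} + O(z^{a−b−1}); that is, there exist constants C, z₀ > 0 such that |Γ(z+a)/Γ(z+b) − z^{a−b}| ≤ C·z^{a−b−1} for all z ≥ z₀. -/

import Mathlib

open Real

/-- Gautschi upper bound: `Γ(x+σ) ≤ Γ(x) * x^σ` for `x > 0`, `σ ∈ [0,1]`. -/
lemma gautschi_upper {x σ : ℝ} (hx : 0 < x) (h0 : 0 < σ) (h1 : σ < 1) :
    Real.Gamma (x + σ) ≤ Real.Gamma x * x ^ σ := by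
  have key := Real.Gamma_mul_add_mul_le_rpow_Gamma_mul_rpow_Gamma
    (s := x) (t := x + 1) (a := 1 - σ) (b := σ) hx (by linarith) (by linarith) h0 (by ring)
  have h2 : (1 - σ) * x + σ * (x + 1) = x + σ := by ring
  rw [h2, Real.Gamma_add_one hx.ne'] at key
  have hΓ : 0 < Real.Gamma x := Real.Gamma_pos_of_pos hx
  calc Real.Gamma (x + σ) ≤ Real.Gamma x ^ (1 - σ) * (x * Real.Gamma x) ^ σ := key
    _ = Real.Gamma x * x ^ σ := by
        rw [Real.mul_rpow hx.le hΓ.le, ← mul_assoc,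
          mul_comm (Real.Gamma x ^ (1 - σ)) (x ^ σ), mul_assoc,
          ← Real.rpow_add hΓ]
        norm_num
        ring

/-- Gautschi lower bound: `x * (x+σ)^(σ-1) ≤ Γ(x+σ)/Γ(x)`, i.e.
`x * Γ(x) ≤ Γ(x+σ) * (x+σ)^(1-σ)`. -/
lemma gautschi_lower {x σ : ℝ} (hx : 0 < x) (h0 : 0 < σ) (h1 : σ < 1) :
    x * Real.Gamma x ≤ Real.Gamma (x + σ) * (x + σ) ^ (1 - σ) := by
  have hxσ : 0 < x + σ := by linarith
  have key := Real.Gamma_mul_add_mul_le_rpow_Gamma_mul_rpow_Gamma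
    (s := x + σ) (t := x + σ + 1) (a := σ) (b := 1 - σ) hxσ (by linarith) h0 (by linarith) (by ring)
  have h2 : σ * (x + σ) + (1 - σ) * (x + σ + 1) = x + 1 := by ring
  rw [h2, Real.Gamma_add_one hx.ne', Real.Gamma_add_one hxσ.ne'] at key
  have hΓ : 0 < Real.Gamma (x + σ) := Real.Gamma_pos_of_pos hxσ
  calc x * Real.Gamma x ≤ Real.Gamma (x+σ) ^ σ * ((x+σ) * Real.Gamma (x+σ)) ^ (1-σ) := key
    _ = Real.Gamma (x + σ) * (x + σ) ^ (1 - σ) := by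
        rw [Real.mul_rpow hxσ.le hΓ.le, ← mul_assoc,
          mul_comm (Real.Gamma (x+σ) ^ σ) ((x+σ) ^ (1-σ)), mul_assoc,
          ← Real.rpow_add hΓ]
        norm_num
        ring

def GammaQ (a b : ℝ) : Prop :=
  ∃ C z₀ : ℝ, 0 < C ∧ 0 < z₀ ∧ ∀ z : ℝ, z₀ ≤ z →
    |Real.Gamma (z + a) / Real.Gamma (z + b) * z ^ (b - a) - 1| ≤ C / z

lemma GammaQ_base (b : ℝ) {σ : ℝ} (h0 : 0 ≤ σ) (h1 : σ < 1) : GammaQ (b + σ) b := by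
  refine ⟨|b| + 3, 2 * |b| + 2, by positivity, by positivity, fun z hz => ?_⟩
  have hb : |b| ≥ 0 := abs_nonneg b
  have hzpos : 0 < z := by linarith
  have hbz : b ≤ |b| := le_abs_self b
  have hbz' : -|b| ≤ b := neg_abs_le b
  have hx : 0 < z + b := by linarith
  have hΓ : 0 < Real.Gamma (z + b) := Real.Gamma_pos_of_pos hx
  rcases eq_or_lt_of_le h0 with h0 | h0
  · -- σ = 0 case
    rw [← h0]
    have : z + (b + 0) = z + b := by ring
    rw [this, div_self hΓ.ne']
    have : b - (b + 0) = 0 := by ring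
    rw [this, Real.rpow_zero]
    simp only [one_mul, sub_self, abs_zero]
    positivity
  · -- σ > 0 case
    set x := z + b with hxdef
    have hxσ : 0 < x + σ := by linarith
    have hΓσ : 0 < Real.Gamma (x + σ) := Real.Gamma_pos_of_pos hxσ
    have hza : z + (b + σ) = x + σ := by rw [hxdef]; ring
    have hba : b - (b + σ) = -σ := by ring
    rw [hza, hba]
    set r := Real.Gamma (x + σ) / Real.Gamma x * z ^ (-σ) with hrdef
    have hrpos : 0 < r := by positivity
    have hzσ : (0:ℝ) < z ^ σ := Real.rpow_pos_of_pos hzpos σ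
    have hzmσ : z ^ (-σ) = (z ^ σ)⁻¹ := Real.rpow_neg hzpos.le σ
    -- upper bound : r ≤ 1 + |b| / z
    have hupper : r ≤ 1 + |b| / z := by
      have h1' : Real.Gamma (x + σ) / Real.Gamma x ≤ x ^ σ := by
        rw [div_le_iff₀ hΓ]
        calc Real.Gamma (x + σ) ≤ Real.Gamma x * x ^ σ := gautschi_upper hx h0 h1
          _ = x ^ σ * Real.Gamma x := by ring
      have h2' : r ≤ (x / z) ^ σ := by
        rw [Real.div_rpow hx.le hzpos.le, hrdef, hzmσ, div_eq_mul_inv]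
        exact mul_le_mul_of_nonneg_right h1' (by positivity)
      rcases le_or_gt x z with hxz | hxz
      · have : (x / z) ^ σ ≤ 1 :=
          Real.rpow_le_one (by positivity) (by rw [div_le_one hzpos]; exact hxz) h0.le
        have : r ≤ 1 := h2'.trans this
        have : (0:ℝ) ≤ |b| / z := by positivity
        linarith
      · have hb1 : (1:ℝ) ≤ x / z := by rw [le_div_iff₀ hzpos]; linarith
        have : (x / z) ^ σ ≤ (x / z) ^ (1:ℝ) :=
          Real.rpow_le_rpow_of_exponent_le hb1 h1.le
        rw [Real.rpow_one] at this
        have hxz' : x / z = 1 + b / z := by field_simp; exact hxdef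
        have hbb : b / z ≤ |b| / z := by gcongr
        calc r ≤ x / z := h2'.trans this
          _ = 1 + b / z := hxz'
          _ ≤ 1 + |b| / z := by linarith
    -- lower bound : 1 - (|b| + 2) / z ≤ r
    have hlower : 1 - (|b| + 2) / z ≤ r := by
      have hA : (1:ℝ) - 2 / z ≤ x / (x + σ) := by
        have hx2 : z / 2 ≤ x := by rw [hxdef]; linarith
        have : σ / (x + σ) ≤ 2 / z := by
          rw [div_le_div_iff₀ hxσ hzpos]
          nlinarith
        have hx' : x / (x + σ) = 1 - σ / (x + σ) := by field_simp; ring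
        linarith [hx'.ge]
      have hB : (1:ℝ) - |b| / z ≤ ((x + σ) / z) ^ σ := by
        set t := (x + σ) / z with htdef
        have ht0 : 0 < t := by positivity
        have htlb : 1 - |b| / z ≤ t := by
          rw [htdef, le_div_iff₀ hzpos]
          have : |b| / z * z = |b| := by field_simp
          nlinarith
        rcases le_or_gt 1 t with ht1 | ht1
        · have : (1:ℝ) ≤ t ^ σ := Real.one_le_rpow ht1 h0.le
          have : |b| / z ≥ 0 := by positivity
          linarith
        · have : t ^ (1:ℝ) ≤ t ^ σ :=
            Real.rpow_le_rpow_of_exponent_ge ht0 ht1.le h1.le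
          rw [Real.rpow_one] at this
          linarith
      have hr_eq : x / (x + σ) * ((x + σ) / z) ^ σ ≤ r := by
        have hlow : x / (x + σ) ^ (1 - σ) ≤ Real.Gamma (x + σ) / Real.Gamma x := by
          rw [div_le_div_iff₀ (by positivity) hΓ]
          have := gautschi_lower hx h0 h1
          nlinarith [Real.rpow_pos_of_pos hxσ (1 - σ)]
        have heq : x / (x + σ) * ((x + σ) / z) ^ σ
            = x / (x + σ) ^ (1 - σ) * z ^ (-σ) := by
          rw [Real.div_rpow hxσ.le hzpos.le, hzmσ, Real.rpow_sub hxσ, Real.rpow_one]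
          field_simp
        rw [heq, hrdef]
        exact mul_le_mul_of_nonneg_right hlow (by positivity)
      have hAB : (1 - 2 / z) * (1 - |b| / z) ≤ x / (x + σ) * ((x + σ) / z) ^ σ := by
        apply mul_le_mul hA hB ?_ (by positivity)
        rw [sub_nonneg, div_le_one hzpos]
        linarith
      have hexp : 1 - (|b| + 2) / z ≤ (1 - 2 / z) * (1 - |b| / z) := by
        have h2z : 2 / z * (|b| / z) ≥ 0 := by positivity
        have e1 : (1 - 2/z) * (1 - |b|/z) = 1 - 2/z - |b|/z + 2/z * (|b|/z) := by ring
        have e2 : (|b| + 2) / z = |b| / z + 2 / z := by ring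
        linarith
      linarith
    rw [abs_le]
    constructor
    · have : (|b| + 2) / z ≤ (|b| + 3) / z := by gcongr <;> linarith
      linarith
    · have : |b| / z ≤ (|b| + 3) / z := by gcongr <;> linarith
      linarith


lemma GammaQ_up {c b : ℝ} (h : GammaQ c b) : GammaQ (c + 1) b := by
  obtain ⟨C, z₀, hC, hz₀, hQ⟩ := h
  refine ⟨C + 2 * (|c| + 1), max z₀ (max C (|c| + 1)), by positivity,
    lt_max_of_lt_left hz₀, fun z hz => ?_⟩
  have hzz₀ : z₀ ≤ z := le_trans (le_max_left _ _) hz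
  have hzC : C ≤ z := le_trans ((le_max_left _ _).trans (le_max_right _ _)) hz
  have hzc : |c| + 1 ≤ z := le_trans ((le_max_right _ _).trans (le_max_right _ _)) hz
  have hzpos : 0 < z := lt_of_lt_of_le (by positivity) hzc
  have hzc0 : 0 < z + c := by
    have := neg_abs_le c; linarith
  have key : Real.Gamma (z + (c + 1)) = (z + c) * Real.Gamma (z + c) := by
    rw [show z + (c + 1) = (z + c) + 1 by ring, Real.Gamma_add_one hzc0.ne']
  have hpow : z ^ (b - (c + 1)) = z ^ (b - c) / z := by
    rw [show b - (c + 1) = (b - c) - 1 by ring, Real.rpow_sub hzpos, Real.rpow_one]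
  set G := Real.Gamma (z + c) / Real.Gamma (z + b) with hG
  set r := G * z ^ (b - c) with hr
  have hrb := hQ z hzz₀
  have hrabs : |r| ≤ 2 := by
    have h1 : |r| - 1 ≤ |r - 1| := by
      have := abs_sub_abs_le_abs_sub r 1; simpa using this
    have h2 : C / z ≤ 1 := by rw [div_le_one hzpos]; exact hzC
    linarith
  have heq : Real.Gamma (z + (c + 1)) / Real.Gamma (z + b) * z ^ (b - (c + 1)) - 1
      = (r - 1) + c / z * r := by
    have hsplit : (z + c) / z = 1 + c / z := by field_simp
    rw [key, hpow]
    have e1 : (z + c) * Real.Gamma (z + c) / Real.Gamma (z + b) * (z ^ (b - c) / z)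
        = (z + c) / z * r := by rw [hr, hG]; ring
    rw [e1, hsplit]
    ring
  rw [heq]
  calc |(r - 1) + c / z * r| ≤ |r - 1| + |c / z * r| := abs_add_le _ _
    _ ≤ C / z + |c| / z * 2 := by
        have : |c / z * r| = |c| / z * |r| := by
          rw [abs_mul, abs_div, abs_of_pos hzpos]
        rw [this]
        have : |c| / z * |r| ≤ |c| / z * 2 :=
          mul_le_mul_of_nonneg_left hrabs (by positivity)
        linarith
    _ = (C + 2 * |c|) / z := by ring
    _ ≤ (C + 2 * (|c| + 1)) / z := by gcongr; linarith

lemma GammaQ_down {c b : ℝ} (h : GammaQ c b) : GammaQ (c - 1) b := by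
  obtain ⟨C, z₀, hC, hz₀, hQ⟩ := h
  refine ⟨2 * C + 2 * (|c - 1| + 1), max z₀ (max C (2 * (|c - 1| + 1))), by positivity,
    lt_max_of_lt_left hz₀, fun z hz => ?_⟩
  have hzz₀ : z₀ ≤ z := le_trans (le_max_left _ _) hz
  have hzC : C ≤ z := le_trans ((le_max_left _ _).trans (le_max_right _ _)) hz
  have hzc : 2 * (|c - 1| + 1) ≤ z := le_trans ((le_max_right _ _).trans (le_max_right _ _)) hz
  have hzpos : 0 < z := lt_of_lt_of_le (by positivity) hzc
  have habs := abs_nonneg (c - 1)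
  have hc2 : z / 2 ≤ z + (c - 1) := by
    have := neg_abs_le (c - 1); linarith
  have hzc0 : 0 < z + (c - 1) := lt_of_lt_of_le (by positivity) hc2
  have key : Real.Gamma (z + c) = (z + (c - 1)) * Real.Gamma (z + (c - 1)) := by
    rw [show z + c = (z + (c - 1)) + 1 by ring, Real.Gamma_add_one hzc0.ne']
  have hpow : z ^ (b - (c - 1)) = z ^ (b - c) * z := by
    rw [show b - (c - 1) = (b - c) + 1 by ring, Real.rpow_add hzpos, Real.rpow_one]
  set G := Real.Gamma (z + c) / Real.Gamma (z + b) with hG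
  set r := G * z ^ (b - c) with hr
  have hrb := hQ z hzz₀
  have hfrac : |z / (z + (c - 1))| ≤ 2 := by
    rw [abs_of_pos (by positivity), div_le_iff₀ hzc0]
    linarith
  have hfrac1 : |z / (z + (c - 1)) - 1| ≤ 2 * |c - 1| / z := by
    have he : z / (z + (c - 1)) - 1 = -(c - 1) / (z + (c - 1)) := by
      field_simp
      ring
    rw [he, abs_div, abs_neg, abs_of_pos hzc0, div_le_div_iff₀ hzc0 hzpos]
    nlinarith
  have heq : Real.Gamma (z + (c - 1)) / Real.Gamma (z + b) * z ^ (b - (c - 1)) - 1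
      = (r - 1) * (z / (z + (c - 1))) + (z / (z + (c - 1)) - 1) := by
    have hΓeq : Real.Gamma (z + (c - 1)) = Real.Gamma (z + c) / (z + (c - 1)) := by
      rw [key]; field_simp
    rw [hΓeq, hpow]
    have e1 : Real.Gamma (z + c) / (z + (c - 1)) / Real.Gamma (z + b) * (z ^ (b - c) * z)
        = r * (z / (z + (c - 1))) := by rw [hr, hG]; ring
    rw [e1]
    ring
  rw [heq]
  calc _ ≤ |(r - 1) * (z / (z + (c - 1)))| + |z / (z + (c - 1)) - 1| := abs_add_le _ _
    _ ≤ C / z * 2 + 2 * |c - 1| / z := by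
        rw [abs_mul]
        gcongr
    _ = (2 * C + 2 * |c - 1|) / z := by ring
    _ ≤ (2 * C + 2 * (|c - 1| + 1)) / z := by gcongr; linarith

lemma GammaQ_int {c b : ℝ} (h : GammaQ c b) : ∀ n : ℤ, GammaQ (c + n) b := by
  intro n
  induction n using Int.induction_on with
  | zero => simpa using h
  | succ k ih =>
      have := GammaQ_up ih
      have he : c + ((k : ℤ) + 1 : ℤ) = (c + (k : ℤ)) + 1 := by push_cast; ring
      rwa [he]
  | pred k ih =>
      have := GammaQ_down ih
      have he : c + (-(k : ℤ) - 1 : ℤ) = (c + (-(k : ℤ) : ℤ)) - 1 := by push_cast; ring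
      rwa [he]

/-- Asymptotics of ratios of Gamma functions:
`Γ(z+a)/Γ(z+b) = z^(a−b) ± O(z^(a−b−1))` as `z → ∞`. -/
theorem gamma_ratio_asymptotics (a b : ℝ) :
    ∃ C z₀ : ℝ, 0 < C ∧ 0 < z₀ ∧ ∀ z : ℝ, z₀ ≤ z →
      |Real.Gamma (z + a) / Real.Gamma (z + b) - z ^ (a - b)|
        ≤ C * z ^ (a - b - 1) := by
  obtain ⟨C, z₀, hC, hz₀, hQ⟩ : GammaQ a b := by
    have hn : ((⌊a - b⌋ : ℤ) : ℝ) ≤ a - b := Int.floor_le _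
    have hn' : a - b < (⌊a - b⌋ : ℤ) + 1 := Int.lt_floor_add_one _
    have hbase := GammaQ_base b (σ := a - b - ⌊a - b⌋) (by linarith) (by linarith)
    have h := GammaQ_int hbase ⌊a - b⌋
    have he : b + (a - b - (⌊a - b⌋ : ℤ)) + (⌊a - b⌋ : ℤ) = a := by ring
    rwa [he] at h
  refine ⟨C, z₀, hC, hz₀, fun z hz => ?_⟩
  have hzpos : 0 < z := lt_of_lt_of_le hz₀ hz
  have hpow : z ^ (b - a) * z ^ (a - b) = 1 := by
    rw [← Real.rpow_add hzpos]
    norm_num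
  have heq : Real.Gamma (z + a) / Real.Gamma (z + b) - z ^ (a - b)
      = z ^ (a - b) * (Real.Gamma (z + a) / Real.Gamma (z + b) * z ^ (b - a) - 1) := by
    linear_combination -(Real.Gamma (z + a) / Real.Gamma (z + b)) * hpow
  rw [heq, abs_mul, abs_of_nonneg (Real.rpow_nonneg hzpos.le _)]
  calc _ ≤ z ^ (a - b) * (C / z) :=
        mul_le_mul_of_nonneg_left (hQ z hz) (Real.rpow_nonneg hzpos.le _)
    _ = C * z ^ (a - b - 1) := by
        rw [Real.rpow_sub hzpos (a - b) 1, Real.rpow_one]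
        ring
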